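/- Let k and n be positive integers. A tableau T ∈ T_n^k is uniquely determined by the sequence of its row-(k+1) (bottom row) entries: if two tableaux in T_n^k have the same bottom row, they are equal. Moreover, an increasing sequence b_1 < b_2 < ⋯ < b_n with b_n = (k+1)n occurs as the bottom-row entries (left to right) of some T ∈ T_n^k if and only if b_j ≥ j(k+1) for all 1 ≤ j ≤ n. -/

import Mathlib

open scoped Classical

/-- Number of North steps (letters `true`) among the first `i` letters of `w`. -/
def upCount (w : List Bool) (i : ℕ) : ℕ := (w.take i).count true

/-- Number of East steps (letters `false`) among the first `i` letters of `w`. -/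
def rightCount (w : List Bool) (i : ℕ) : ℕ := (w.take i).count false

/-- `w` is an `(m,n)`-Dyck path: a word with `n` North letters (`true`) and `m` East
letters (`false`), each of whose prefixes with `b` North and `a` East letters
satisfies `b*m - a*n ≥ 0`. -/
def IsDyck (m n : ℕ) (w : List Bool) : Prop :=
  w.length = m + n ∧ w.count true = n ∧
  ∀ i, n * rightCount w i ≤ m * upCount w i

/-- The rank of the `(i+1)`-st step (0-indexed `i`) of `w`, namely `b*m - a*n` where
`b` and `a` are the numbers of North and East letters among the first `i` letters. -/
def rank (m n : ℕ) (w : List Bool) (i : ℕ) : ℤ :=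
  (m : ℤ) * upCount w i - (n : ℤ) * rightCount w i

/-- The sweep map: list the steps of `w` in increasing order of their ranks. -/
def sweep (m n : ℕ) (w : List Bool) : List Bool :=
  (((List.range w.length).mergeSort
      (fun i j => decide (rank m n w i ≤ rank m n w j))).map
    (fun i => w.getD i false))

/-- The word `EN(w)`: list the steps of `w` in increasing order of their end ranks
(the end rank of the `(i+1)`-st step is `rank w (i+1)`). -/
def sweepEN (m n : ℕ) (w : List Bool) : List Bool :=
  (((List.range w.length).mergeSort
      (fun i j => decide (rank m n w (i + 1) ≤ rank m n w (j + 1)))).map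
    (fun i => w.getD i false))

/-- One step of the filling algorithm: place entry `p.1` according to letter `p.2`
(`true` = S : start a new column; `false` = W : put it below the smallest active
entry, an active entry being the current bottom entry of a column of height `< k+1`). -/
def fillStep (k : ℕ) (cols : List (List ℕ)) (p : ℕ × Bool) : List (List ℕ) :=
  if p.2 then cols ++ [[p.1]]
  else
    match ((List.range cols.length).filter
        (fun j => (cols.getD j []).length < k + 1)).argmin
        (fun j => (cols.getD j []).getLastD 0) with
    | none => cols
    | some j => cols.set j ((cols.getD j []) ++ [p.1])

/-- The state (list of columns, each recorded top to bottom) of the filling algorithm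
after the entries `1, …, t` have been placed according to the first `t` letters of `w`. -/
def fillColsUpTo (k : ℕ) (w : List Bool) (t : ℕ) : List (List ℕ) :=
  ((List.range t).map (fun i => (i + 1, w.getD i false))).foldl (fillStep k) []

/-- The final state of the filling algorithm on the word `w` (entries
`1, …, m+n-1` placed, i.e. all letters but the last one processed). -/
def fillCols (k : ℕ) (w : List Bool) : List (List ℕ) :=
  fillColsUpTo k w (w.length - 1)

/-- The tableau `T(D)` produced by the filling algorithm, as a function
(row, column) ↦ entry, rows and columns 0-indexed. -/
def fillTableau (k n : ℕ) (w : List Bool) : Fin (k + 1) → Fin n → ℕ :=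
  fun i j => ((fillCols k w).getD j []).getD i 0

/-- `T` fills the `(k+1) × n` array with `1, …, (k+1)n`, increasing along rows and
columns. -/
def IsFilling (k n : ℕ) (T : Fin (k + 1) → Fin n → ℕ) : Prop :=
  (∀ i j, T i j ∈ Finset.Icc 1 ((k + 1) * n)) ∧
  Function.Injective (fun p : Fin (k + 1) × Fin n => T p.1 p.2) ∧
  (∀ i, StrictMono (T i)) ∧
  (∀ j, StrictMono (fun i => T i j))

/-- For all entries `a < b < c < d` of `T` with `d` directly below `a`, the entries
`b` and `c` do not lie in the same column. -/
def NoBadQuadruple (k n : ℕ) (T : Fin (k + 1) → Fin n → ℕ) : Prop :=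
  ∀ (i : Fin (k + 1)) (hi : (i : ℕ) + 1 < k + 1) (j : Fin n)
    (r r' : Fin (k + 1)) (c : Fin n), r < r' →
      ¬ (T i j < T r c ∧ T r c < T r' c ∧ T r' c < T ⟨(i : ℕ) + 1, hi⟩ j)

/-- The family `𝒯ₙᵏ` of tableaux. -/
def IsFussTableau (k n : ℕ) (T : Fin (k + 1) → Fin n → ℕ) : Prop :=
  IsFilling k n T ∧ NoBadQuadruple k n T

/-- A value `r` is marked for `T` when `r - 1` is a bottom-row entry of `T`. -/
def Marked (k n : ℕ) (T : Fin (k + 1) → Fin n → ℕ) (r : ℕ) : Prop :=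
  ∃ j : Fin n, T (Fin.last k) j + 1 = r

/-- One move of the walk `w(T)` on the values `1, …, M` (where `M = m + n`):
from a row-1 entry `x` move to `r + 1` where `r` is the bottom entry of the column
of `x`; from an entry `x` of one of the rows `2, …, k+1` move to the largest
unmarked value `≤ r`, where `r` is the entry directly above `x`; from `x = M`
move to the largest unmarked value `< M`. -/
noncomputable def walkStep (k n M : ℕ) (T : Fin (k + 1) → Fin n → ℕ) (x : ℕ) : ℕ :=
  if h : ∃ j : Fin n, T 0 j = x then
    T (Fin.last k) (Classical.choose h) + 1
  else if h2 : ∃ p : Fin (k + 1) × Fin n, T p.1 p.2 = x then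
    let p := Classical.choose h2
    ((((Finset.Icc 1 M).filter
        (fun y => y ≤ T (⟨(p.1 : ℕ) - 1, lt_of_le_of_lt (Nat.sub_le _ _) p.1.2⟩ : Fin (k + 1)) p.2
          ∧ ¬ Marked k n T y))).max).getD 0
  else
    ((((Finset.Icc 1 M).filter (fun y => y < M ∧ ¬ Marked k n T y))).max).getD 0

/-- The area of the path `w`: the number of lattice cells of the `m × n` rectangle
lying below the path whose interiors lie entirely above the diagonal.
The cell in column `x` and row `y` (0-indexed) has its interior above the diagonal
iff `n*(x+1) ≤ m*y`, and lies below the path iff the `(y+1)`-st North step of `w`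
occurs before the `(x+1)`-st East step. -/
def nthLetterIdx (w : List Bool) (b : Bool) (j : ℕ) : ℕ :=
  (((List.range w.length).filter (fun i => w.getD i false = b))).getD j 0

def area (m n : ℕ) (w : List Bool) : ℕ :=
  ((Finset.range m ×ˢ Finset.range n).filter
    (fun p => n * (p.1 + 1) ≤ m * p.2 ∧
      nthLetterIdx w true p.2 < nthLetterIdx w false p.1)).card

/-- The reduction `red(T)`: delete column 1 and replace each remaining entry `i` by
`i` minus the number of column-1 entries smaller than `i`. -/
def red (k n : ℕ) (T : Fin (k + 1) → Fin n → ℕ) : Fin (k + 1) → Fin (n - 1) → ℕ :=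
  fun i j =>
    let v := T i ⟨(j : ℕ) + 1, by have := j.2; omega⟩
    v - (Finset.univ.filter
      (fun u : Fin (k + 1) => T u ⟨0, by have := j.2; omega⟩ < v)).card

/-- The (finite) set of `(m,n)`-Dyck paths as a `Finset` of words. -/
noncomputable def dyckFinset (m n : ℕ) : Finset (List Bool) :=
  ((Finset.univ : Finset (Fin (m + n) → Bool)).image List.ofFn).filter
    (fun w => IsDyck m n w)

def colsetA (k n : ℕ) (g : ℕ → Option (Fin n)) (j : Fin n) : Finset ℕ :=
  (Finset.Icc 1 ((k + 1) * n)).filter (fun u => g u = some j)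

def cntA (k n : ℕ) (g : ℕ → Option (Fin n)) (j : Fin n) : ℕ := (colsetA k n g j).card

def cntAboveA (k n : ℕ) (g : ℕ → Option (Fin n)) (j : Fin n) (u : ℕ) : ℕ :=
  ((colsetA k n g j).filter (fun x => u < x)).card

noncomputable def topA (n : ℕ) (g : ℕ → Option (Fin n)) (j : Fin n) : ℕ :=
  sInf {u | g u = some j}

def activeA (k n : ℕ) (g : ℕ → Option (Fin n)) (j : Fin n) : Prop :=
  1 ≤ cntA k n g j ∧ cntA k n g j ≤ k

noncomputable def pickA (k n : ℕ) (b : Fin n → ℕ) (g : ℕ → Option (Fin n)) (v : ℕ) :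
    Option (Fin n) :=
  if h : ∃ j, b j = v then some h.choose
  else if hS : (Finset.univ.filter (fun j => activeA k n g j)).Nonempty then
    some (Finset.exists_max_image _ (topA n g) hS).choose
  else none

noncomputable def stA (k n : ℕ) (b : Fin n → ℕ) : ℕ → ℕ → Option (Fin n)
  | 0 => fun _ => none
  | (t+1) => Function.update (stA k n b t) ((k + 1) * n - t)
      (pickA k n b (stA k n b t) ((k + 1) * n - t))

lemma mem_colsetA {k n : ℕ} {g : ℕ → Option (Fin n)} {j : Fin n} {u : ℕ} :
    u ∈ colsetA k n g j ↔ (1 ≤ u ∧ u ≤ (k+1)*n) ∧ g u = some j := by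
  simp [colsetA, Finset.mem_filter, Finset.mem_Icc]

lemma pickA_spec_max {k n : ℕ} {b : Fin n → ℕ} {g : ℕ → Option (Fin n)} {v : ℕ}
    {c : Fin n} (h : pickA k n b g v = some c) (hnb : ¬ ∃ j, b j = v) :
    activeA k n g c ∧ ∀ j', activeA k n g j' → topA n g j' ≤ topA n g c := by
  rw [pickA, dif_neg hnb] at h
  by_cases hS : (Finset.univ.filter (fun j => activeA k n g j)).Nonempty
  · rw [dif_pos hS] at h
    have hc : c = (Finset.exists_max_image _ (topA n g) hS).choose :=
      (Option.some_injective _ h).symm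
    obtain ⟨hmem, hmax⟩ := (Finset.exists_max_image _ (topA n g) hS).choose_spec
    subst hc
    refine ⟨(Finset.mem_filter.mp hmem).2, fun j' hj' => hmax j' ?_⟩
    exact Finset.mem_filter.mpr ⟨Finset.mem_univ _, hj'⟩
  · rw [dif_neg hS] at h; exact absurd h (by simp)

lemma pickA_spec_bottom {k n : ℕ} {b : Fin n → ℕ} {g : ℕ → Option (Fin n)} {v : ℕ}
    {c : Fin n} (h : pickA k n b g v = some c) (hb : ∃ j, b j = v) :
    b c = v := by
  rw [pickA, dif_pos hb] at h
  have := hb.choose_spec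
  rw [← Option.some_injective _ h]
  exact this

lemma sum_cntA (k n : ℕ) (hn : 0 < n) (g : ℕ → Option (Fin n)) (v : ℕ)
    (hA1 : ∀ u j, g u = some j → v < u ∧ u ≤ (k+1)*n)
    (hA2 : ∀ u, v < u → u ≤ (k+1)*n → ∃ j, g u = some j) :
    ∑ j : Fin n, cntA k n g j = (k+1)*n - v := by
  classical
  have hmaps : ∀ u ∈ Finset.Icc (v+1) ((k+1)*n),
      (g u).getD ⟨0, hn⟩ ∈ (Finset.univ : Finset (Fin n)) := fun _ _ => Finset.mem_univ _
  have hfib := Finset.card_eq_sum_card_fiberwise hmaps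
  have hcard : (Finset.Icc (v+1) ((k+1)*n)).card = (k+1)*n - v := by
    rw [Nat.card_Icc]; omega
  rw [hcard] at hfib
  rw [hfib]
  apply Finset.sum_congr rfl
  intro j _
  rw [cntA]
  congr 1
  ext u
  constructor
  · intro h
    obtain ⟨⟨h1, h2⟩, h3⟩ := mem_colsetA.mp h
    have := hA1 u j h3
    exact Finset.mem_filter.mpr ⟨Finset.mem_Icc.mpr ⟨by omega, h2⟩, by rw [h3]; rfl⟩
  · intro h
    have h3 := (Finset.mem_filter.mp h).2
    have h12 := Finset.mem_Icc.mp (Finset.mem_filter.mp h).1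
    obtain ⟨j₂, hj₂⟩ := hA2 u (by omega) h12.2
    rw [hj₂] at h3
    refine mem_colsetA.mpr ⟨⟨by omega, h12.2⟩, by rw [hj₂]; exact congrArg some h3⟩

def InvA (k n : ℕ) (b : Fin n → ℕ) (t : ℕ) : Prop :=
  (∀ u j, stA k n b t u = some j → ((k+1)*n - t < u ∧ u ≤ (k+1)*n)) ∧
  (∀ u, (k+1)*n - t < u → u ≤ (k+1)*n → ∃ j, stA k n b t u = some j) ∧
  (∀ j, (k+1)*n - t < b j → stA k n b t (b j) = some j) ∧
  (∀ u j, stA k n b t u = some j → u ≤ b j) ∧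
  (∀ j, cntA k n (stA k n b t) j ≤ k + 1) ∧
  (∀ j j' u, j < j' → stA k n b t u = some j →
    cntAboveA k n (stA k n b t) j u < cntAboveA k n (stA k n b t) j' u)

lemma invA (k n : ℕ) (hn : 0 < n) (b : Fin n → ℕ) (hmono : StrictMono b)
    (hbN : ∀ j, b j ≤ (k+1)*n) (hb : ∀ j : Fin n, ((j : ℕ) + 1) * (k + 1) ≤ b j) :
    ∀ t, t ≤ (k+1)*n → InvA k n b t := by
  classical
  have hb1 : ∀ j, 1 ≤ b j := fun j =>
    le_trans (Nat.one_le_iff_ne_zero.mpr (by positivity)) (hb j)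
  intro t
  induction t with
  | zero =>
    intro _
    refine ⟨?_, ?_, ?_, ?_, ?_, ?_⟩
    · intro u j h; simp [stA] at h
    · intro u h1 h2; omega
    · intro j h; exact absurd h (by have := hbN j; omega)
    · intro u j h; simp [stA] at h
    · intro j
      have : colsetA k n (stA k n b 0) j = ∅ := by
        ext u; simp [mem_colsetA, stA]
      simp [cntA, this]
    · intro j j' u _ h; simp [stA] at h
  | succ t ih =>
    intro ht
    have IH := ih (by omega)
    obtain ⟨A1, A2, B, B', E, D⟩ := IH
    set N := (k+1)*n with hNdef
    set g := stA k n b t with hgdef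
    set v := N - t with hvdef
    have hv1 : 1 ≤ v := by omega
    have hvN : v ≤ N := by omega
    -- the pick succeeds
    have hpick : ∃ c, pickA k n b g v = some c ∧
        ((cntA k n g c = 0 ∧ b c = v) ∨
         (activeA k n g c ∧ ∀ j', activeA k n g j' → topA n g j' ≤ topA n g c)) := by
      by_cases hex : ∃ j, b j = v
      · have hpc : pickA k n b g v = some hex.choose := by rw [pickA, dif_pos hex]
        refine ⟨hex.choose, hpc, Or.inl ⟨?_, hex.choose_spec⟩⟩
        have : colsetA k n g hex.choose = ∅ := by
          ext u
          simp only [mem_colsetA, Finset.notMem_empty, iff_false, not_and]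
          intro _ hu
          have h1 := (A1 u _ hu).1
          have h2 := B' u _ hu
          rw [hex.choose_spec] at h2
          omega
        simp [cntA, this]
      · have hS : (Finset.univ.filter (fun j => activeA k n g j)).Nonempty := by
          by_contra hS'
          have hnact : ∀ j, ¬ activeA k n g j := by
            intro j hj
            exact hS' ⟨j, Finset.mem_filter.mpr ⟨Finset.mem_univ _, hj⟩⟩
          have hcnt01 : ∀ j, cntA k n g j = 0 ∨ cntA k n g j = k+1 := by
            intro j
            have h1 := E j
            have h2 := hnact j
            rw [activeA] at h2
            omega
          have hsum := sum_cntA k n hn g v A1 A2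
          have hstart : ∀ j, (1 ≤ cntA k n g j ↔ v < b j) := by
            intro j
            constructor
            · intro h1
              obtain ⟨u, hu⟩ := Finset.card_pos.mp h1
              obtain ⟨_, hu2⟩ := mem_colsetA.mp hu
              have := (A1 u j hu2).1
              have := B' u j hu2
              omega
            · intro h1
              have hBj := B j h1
              have : b j ∈ colsetA k n g j :=
                mem_colsetA.mpr ⟨⟨hb1 j, hbN j⟩, hBj⟩
              exact Finset.card_pos.mpr ⟨b j, this⟩
          have hcnt_eq : ∀ j, cntA k n g j = if v < b j then k+1 else 0 := by
            intro j
            rcases hcnt01 j with h | h <;> split_ifs with hvb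
            · exact absurd ((hstart j).mpr hvb) (by omega)
            · exact h
            · exact h
            · exact absurd ((hstart j).mp (by omega)) hvb
          set sc := (Finset.univ.filter (fun j => v < b j)).card with hscdef
          have hsum2 : ∑ j : Fin n, cntA k n g j = sc * (k+1) := by
            rw [hscdef, ← Finset.sum_filter_add_sum_filter_not Finset.univ (fun j => v < b j)]
            have e1 : ∑ j ∈ Finset.univ.filter (fun j => v < b j), cntA k n g j
                = ∑ _j ∈ Finset.univ.filter (fun j => v < b j), (k+1) := by
              apply Finset.sum_congr rfl
              intro j hj
              rw [hcnt_eq j, if_pos (Finset.mem_filter.mp hj).2]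
            have e2 : ∑ j ∈ Finset.univ.filter (fun j => ¬ v < b j), cntA k n g j = 0 := by
              apply Finset.sum_eq_zero
              intro j hj
              rw [hcnt_eq j, if_neg (Finset.mem_filter.mp hj).2]
            rw [e1, e2, Finset.sum_const, smul_eq_mul]
            omega
          have hscn : sc ≤ n := by
            rw [hscdef]
            calc (Finset.univ.filter (fun j => v < b j)).card
                ≤ Finset.univ.card := Finset.card_filter_le _ _
              _ = n := by simp
          have hNn : N = n * (k+1) := by rw [hNdef]; ring
          have hsub : (n - sc) * (k+1) = n * (k+1) - sc * (k+1) := Nat.sub_mul n sc (k+1)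
          have hvm : v = (n - sc) * (k+1) := by omega
          set m := n - sc with hmdef
          have hm1 : 1 ≤ m := by
            rcases Nat.eq_zero_or_pos m with h | h
            · rw [h] at hvm; simp at hvm; omega
            · exact h
          have hmn : m - 1 < n := by omega
          set jst : Fin n := ⟨m-1, hmn⟩ with hjstdef
          have hjb : b jst ≤ v := by
            by_contra hgt
            push_neg at hgt
            have hsubset : Finset.univ.filter (fun j => ¬ v < b j) ⊆ Finset.Iio jst := by
              intro j hj
              have hj2 := (Finset.mem_filter.mp hj).2
              push_neg at hj2
              have : b j < b jst := by omega
              exact Finset.mem_Iio.mpr (hmono.lt_iff_lt.mp this)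
            have hcard1 : (Finset.univ.filter (fun j => ¬ v < b j)).card = n - sc := by
              have := Finset.card_filter_add_card_filter_not
                (s := (Finset.univ : Finset (Fin n))) (p := fun j => v < b j)
              simp only [Finset.card_univ, Fintype.card_fin] at this
              omega
            have hcard2 := Finset.card_le_card hsubset
            rw [hcard1, Fin.card_Iio] at hcard2
            simp only [hjstdef] at hcard2
            omega
          have hjv : b jst = v := by
            have h1 := hb jst
            have h2 : ((jst : ℕ) + 1) = m := by simp [hjstdef]; omega
            rw [h2] at h1
            omega
          exact hex ⟨jst, hjv⟩
        have hpc : ∃ c, pickA k n b g v = some c := by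
          rw [pickA, dif_neg hex, dif_pos hS]
          exact ⟨_, rfl⟩
        obtain ⟨c, hc⟩ := hpc
        exact ⟨c, hc, Or.inr (pickA_spec_max hc hex)⟩
    obtain ⟨c, hpc, hcase⟩ := hpick
    have hst1 : stA k n b (t+1) = Function.update g v (some c) := by
      have h0 : stA k n b (t+1) = Function.update g v (pickA k n b g v) := rfl
      rw [h0, hpc]
    have hgv_none : g v = none := by
      cases hg : g v with
      | none => rfl
      | some j => exact absurd (A1 v j hg).1 (by omega)
    have hg'v : stA k n b (t+1) v = some c := by
      rw [hst1, Function.update_self]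
    have hg'ne : ∀ u, u ≠ v → stA k n b (t+1) u = g u := by
      intro u hu; rw [hst1, Function.update_of_ne hu]
    have hcol_c : colsetA k n (stA k n b (t+1)) c = insert v (colsetA k n g c) := by
      ext u
      by_cases hu : u = v
      · subst hu
        constructor
        · intro _; exact Finset.mem_insert_self v _
        · intro _; exact mem_colsetA.mpr ⟨⟨hv1, hvN⟩, hg'v⟩
      · rw [mem_colsetA, hg'ne u hu, Finset.mem_insert, ← mem_colsetA]
        constructor
        · intro h; exact Or.inr h
        · rintro (h | h)
          · exact absurd h hu
          · exact h
    have hcol_ne : ∀ j, j ≠ c → colsetA k n (stA k n b (t+1)) j = colsetA k n g j := by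
      intro j hj
      ext u
      by_cases hu : u = v
      · subst hu
        simp only [mem_colsetA, hg'v, hgv_none]
        constructor
        · rintro ⟨_, h⟩; exact absurd (Option.some_injective _ h).symm hj
        · rintro ⟨_, h⟩; cases h
      · rw [mem_colsetA, hg'ne u hu, ← mem_colsetA]
    have hv_notmem : v ∉ colsetA k n g c := by
      intro h
      rw [mem_colsetA, hgv_none] at h
      cases h.2
    have hcnt_c : cntA k n (stA k n b (t+1)) c = cntA k n g c + 1 := by
      rw [cntA, hcol_c, Finset.card_insert_of_notMem hv_notmem, cntA]
    have hcnt_ne : ∀ j, j ≠ c → cntA k n (stA k n b (t+1)) j = cntA k n g j := by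
      intro j hj; rw [cntA, hcol_ne j hj, cntA]
    have hca_ge : ∀ (j : Fin n) (u : ℕ), v ≤ u →
        cntAboveA k n (stA k n b (t+1)) j u = cntAboveA k n g j u := by
      intro j u hu
      by_cases hj : j = c
      · subst hj
        rw [cntAboveA, hcol_c, Finset.filter_insert, if_neg (by omega), cntAboveA]
      · rw [cntAboveA, hcol_ne j hj, cntAboveA]
    have hfilt_all : ∀ j : Fin n, (colsetA k n g j).filter (fun x => v < x) = colsetA k n g j := by
      intro j
      apply Finset.filter_true_of_mem
      intro x hx
      have := (A1 x j (mem_colsetA.mp hx).2).1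
      omega
    have hca_v : ∀ j : Fin n, cntAboveA k n (stA k n b (t+1)) j v = cntA k n g j := by
      intro j
      by_cases hj : j = c
      · subst hj
        rw [cntAboveA, hcol_c, Finset.filter_insert, if_neg (lt_irrefl v), hfilt_all, cntA]
      · rw [cntAboveA, hcol_ne j hj, hfilt_all, cntA]
    have hNt1 : N - (t+1) = v - 1 := by omega
    refine ⟨?_, ?_, ?_, ?_, ?_, ?_⟩
    · -- A1
      intro u j h
      by_cases hu : u = v
      · subst hu; constructor <;> omega
      · rw [hg'ne u hu] at h
        have := A1 u j h
        constructor <;> omega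
    · -- A2
      intro u h1 h2
      by_cases hu : u = v
      · subst hu; exact ⟨c, hg'v⟩
      · have : v < u := by omega
        obtain ⟨j, hj⟩ := A2 u this h2
        exact ⟨j, by rw [hg'ne u hu]; exact hj⟩
    · -- B
      intro j hj
      by_cases hbj : b j = v
      · have hex : ∃ j', b j' = v := ⟨j, hbj⟩
        have hbc := pickA_spec_bottom hpc hex
        have : c = j := hmono.injective (by rw [hbc, hbj])
        rw [hbj, hg'v, this]
      · have hgt : v < b j := by
          have : N - (t+1) < b j := hj
          omega
        have := B j hgt
        rw [hg'ne (b j) hbj]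
        exact this
    · -- B'
      intro u j h
      by_cases hu : u = v
      · subst hu
        have hcj : c = j := Option.some_injective _ (hg'v ▸ h)
        subst hcj
        rcases hcase with ⟨_, hbc⟩ | ⟨hact, _⟩
        · omega
        · obtain ⟨u₀, hu₀⟩ := Finset.card_pos.mp hact.1
          have h1 := (A1 u₀ c (mem_colsetA.mp hu₀).2).1
          have h2 := B' u₀ c (mem_colsetA.mp hu₀).2
          omega
      · rw [hg'ne u hu] at h
        exact B' u j h
    · -- E
      intro j
      by_cases hj : j = c
      · subst hj
        rw [hcnt_c]
        rcases hcase with ⟨h0, _⟩ | ⟨hact, _⟩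
        · omega
        · have := hact.2; omega
      · rw [hcnt_ne j hj]; exact E j
    · -- D
      intro j j' u hjj' h
      by_cases hu : u = v
      · subst hu
        have hcj : c = j := Option.some_injective _ (hg'v ▸ h)
        subst hcj
        rw [hca_v, hca_v]
        rcases hcase with ⟨h0, hbc⟩ | ⟨hact, hmax⟩
        · rw [h0]
          have hbj' : v < b j' := by
            have := hmono hjj'
            omega
          have hBj' := B j' hbj'
          exact Finset.card_pos.mpr ⟨b j', mem_colsetA.mpr ⟨⟨hb1 j', hbN j'⟩, hBj'⟩⟩
        · -- argmax case
          have hsetne : {u | g u = some c}.Nonempty := by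
            obtain ⟨u₀, hu₀⟩ := Finset.card_pos.mp hact.1
            exact ⟨u₀, (mem_colsetA.mp hu₀).2⟩
          set mtop := topA n g c with hmtopdef
          have hmt : g mtop = some c := Nat.sInf_mem hsetne
          have hmem_mt : mtop ∈ colsetA k n g c := by
            have := A1 mtop c hmt
            exact mem_colsetA.mpr ⟨⟨by omega, this.2⟩, hmt⟩
          have hD := D c j' mtop hjj' hmt
          have herase : (colsetA k n g c).filter (fun x => mtop < x)
              = (colsetA k n g c).erase mtop := by
            ext x
            simp only [Finset.mem_filter, Finset.mem_erase]
            constructor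
            · rintro ⟨h1, h2⟩; exact ⟨by omega, h1⟩
            · rintro ⟨h1, h2⟩
              have hle : mtop ≤ x := Nat.sInf_le (mem_colsetA.mp h2).2
              exact ⟨h2, by omega⟩
          have hcam : cntAboveA k n g c mtop = cntA k n g c - 1 := by
            rw [cntAboveA, herase, Finset.card_erase_of_mem hmem_mt, cntA]
          have hcaj' : cntAboveA k n g j' mtop ≤ cntA k n g j' :=
            Finset.card_filter_le _ _
          have hcnt_le : cntA k n g c ≤ cntA k n g j' := by
            have := hact.1; omega
          by_contra hle
          push_neg at hle
          have hceq : cntA k n g j' = cntA k n g c := by omega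
          have hactj' : activeA k n g j' := by
            constructor
            · have := hact.1; omega
            · have := hact.2; omega
          have htople := hmax j' hactj'
          have hfull : cntA k n g j' ≤ cntAboveA k n g j' mtop := by omega
          have hfeq : (colsetA k n g j').filter (fun x => mtop < x) = colsetA k n g j' := by
            apply Finset.eq_of_subset_of_card_le (Finset.filter_subset _ _)
            exact hfull
          have hsetne' : {u | g u = some j'}.Nonempty := by
            have : 1 ≤ cntA k n g j' := by omega
            obtain ⟨u₁, hu₁⟩ := Finset.card_pos.mp this
            exact ⟨u₁, (mem_colsetA.mp hu₁).2⟩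
          have htopmem : g (topA n g j') = some j' := Nat.sInf_mem hsetne'
          have htopmem' : topA n g j' ∈ colsetA k n g j' := by
            have := A1 _ _ htopmem
            exact mem_colsetA.mpr ⟨⟨by omega, this.2⟩, htopmem⟩
          rw [← hfeq] at htopmem'
          have := (Finset.mem_filter.mp htopmem').2
          omega
      · rw [hg'ne u hu] at h
        have huv : v < u := (A1 u j h).1
        rw [hca_ge j u (by omega), hca_ge j' u (by omega)]
        exact D j j' u hjj' h


lemma stA_mono (k n : ℕ) (hn : 0 < n) (b : Fin n → ℕ) (hmono : StrictMono b)
    (hbN : ∀ j, b j ≤ (k+1)*n) (hb : ∀ j : Fin n, ((j : ℕ) + 1) * (k + 1) ≤ b j) :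
    ∀ s t u j, t + s ≤ (k+1)*n → stA k n b t u = some j → stA k n b (t + s) u = some j := by
  intro s
  induction s with
  | zero => intro t u j _ h; exact h
  | succ s ih =>
    intro t u j hts h
    have h1 : stA k n b (t+s) u = some j := ih t u j (by omega) h
    obtain ⟨A1, _, _, _, _, _⟩ := invA k n hn b hmono hbN hb (t+s) (by omega)
    have hne : u ≠ (k+1)*n - (t+s) := by
      intro he
      have := (A1 u j h1).1
      omega
    have heq : stA k n b (t + (s+1)) = Function.update (stA k n b (t+s)) ((k+1)*n - (t+s))
        (pickA k n b (stA k n b (t+s)) ((k+1)*n - (t+s))) := rfl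
    rw [heq, Function.update_of_ne hne]
    exact h1
lemma s11_surj (k n : ℕ) (T : Fin (k + 1) → Fin n → ℕ) (hT : IsFilling k n T)
    (v : ℕ) (hv : v ∈ Finset.Icc 1 ((k+1)*n)) : ∃ i j, T i j = v := by
  have himg : Finset.image (fun p : Fin (k + 1) × Fin n => T p.1 p.2) Finset.univ
      = Finset.Icc 1 ((k+1)*n) := by
    apply Finset.eq_of_subset_of_card_le
    · intro x hx
      obtain ⟨p, _, rfl⟩ := Finset.mem_image.mp hx
      exact hT.1 p.1 p.2
    · rw [Finset.card_image_of_injective _ hT.2.1]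
      simp [Nat.card_Icc]
  rw [← himg] at hv
  obtain ⟨p, _, hp⟩ := Finset.mem_image.mp hv
  exact ⟨p.1, p.2, hp⟩

lemma s11_key (k n : ℕ) (T T' : Fin (k + 1) → Fin n → ℕ)
    (hT : IsFussTableau k n T) (hT' : IsFussTableau k n T')
    (hbot : ∀ j, T (Fin.last k) j = T' (Fin.last k) j) (v : ℕ)
    (IH : ∀ u, v < u → ∀ i j, T i j = u ↔ T' i j = u) :
    ∀ i j, T i j = v → T' i j = v := by
  intro i j hv
  by_cases hik : (i : ℕ) = k
  · have : i = Fin.last k := Fin.ext hik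
    subst this
    rw [← hbot j]; exact hv
  · have hik : (i : ℕ) < k := lt_of_le_of_ne (Nat.lt_succ_iff.mp i.2) hik
    have hi1 : (i : ℕ) + 1 < k + 1 := by omega
    set d := T ⟨(i : ℕ) + 1, hi1⟩ j with hd_def
    have hvd : v < d := by
      rw [← hv]
      exact hT.1.2.2.2 j (show i < ⟨(i : ℕ) + 1, hi1⟩ from by
        rw [Fin.lt_def]; simp)
    have hdT' : T' ⟨(i : ℕ) + 1, hi1⟩ j = d := (IH d hvd _ _).mp rfl
    obtain ⟨i', j', hv'⟩ := s11_surj k n T' hT'.1 v (hv ▸ hT.1.1 i j)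
    by_cases hik' : (i' : ℕ) = k
    · exfalso
      have : i' = Fin.last k := Fin.ext hik'
      subst this
      have : T (Fin.last k) j' = v := by rw [hbot j']; exact hv'
      have heq : ((Fin.last k, j') : Fin (k+1) × Fin n) = (i, j) :=
        hT.1.2.1 (show T (Fin.last k) j' = T i j from this.trans hv.symm)
      have : (Fin.last k : ℕ) = (i : ℕ) :=
        congrArg (fun p : Fin (k+1) × Fin n => ((p.1 : ℕ) : ℕ)) heq
      simp [Fin.last] at this; omega
    · have hik' : (i' : ℕ) < k := lt_of_le_of_ne (Nat.lt_succ_iff.mp i'.2) hik'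
      have hi1' : (i' : ℕ) + 1 < k + 1 := by omega
      set d' := T' ⟨(i' : ℕ) + 1, hi1'⟩ j' with hd'_def
      have hvd' : v < d' := by
        rw [← hv']
        exact hT'.1.2.2.2 j' (show i' < ⟨(i' : ℕ) + 1, hi1'⟩ from by
          rw [Fin.lt_def]; simp)
      have hdT : T ⟨(i' : ℕ) + 1, hi1'⟩ j' = d' := (IH d' hvd' _ _).mpr rfl
      rcases lt_trichotomy (T i' j') v with hw | hw | hw
      · rcases lt_trichotomy (T' i j) v with hw' | hw' | hw'
        · have h1 := hT.2 i' hi1' j' i ⟨(i : ℕ) + 1, hi1⟩ j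
            (show i < ⟨(i : ℕ) + 1, hi1⟩ from by rw [Fin.lt_def]; simp)
          have h2 := hT'.2 i hi1 j i' ⟨(i' : ℕ) + 1, hi1'⟩ j'
            (show i' < ⟨(i' : ℕ) + 1, hi1'⟩ from by rw [Fin.lt_def]; simp)
          rw [hv, ← hd_def, hdT] at h1
          rw [hv', ← hd'_def, hdT'] at h2
          push_neg at h1 h2
          have hdeq : d = d' := le_antisymm (h2 hw' hvd') (h1 hw hvd)
          have heqv : T' ⟨(i : ℕ) + 1, hi1⟩ j = T' ⟨(i' : ℕ) + 1, hi1'⟩ j' := by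
            rw [hdT', hdeq]
          have heq : ((⟨(i : ℕ) + 1, hi1⟩, j) : Fin (k+1) × Fin n)
              = (⟨(i' : ℕ) + 1, hi1'⟩, j') := hT'.1.2.1 heqv
          have hii : (i : ℕ) + 1 = (i' : ℕ) + 1 :=
            congrArg (fun p : Fin (k+1) × Fin n => ((p.1 : ℕ) : ℕ)) heq
          have hii : (i : ℕ) = (i' : ℕ) := by omega
          have hjj : j = j' := congrArg Prod.snd heq
          have hii' : i = i' := Fin.ext hii
          rw [hii', hjj]; exact hv' 
        · exact hw'
        · exfalso
          have := (IH _ hw' i j).mpr rfl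
          omega
      · have heq : ((i', j') : Fin (k+1) × Fin n) = (i, j) :=
          hT.1.2.1 (show T i' j' = T i j from hw.trans hv.symm)
        have h1 : i' = i := congrArg Prod.fst heq
        have h2 : j' = j := congrArg Prod.snd heq
        rw [← h1, ← h2]; exact hv'
      · exfalso
        have := (IH _ hw i' j').mp rfl
        omega

lemma s11_uniqueness (k n : ℕ) (T T' : Fin (k + 1) → Fin n → ℕ)
    (hT : IsFussTableau k n T) (hT' : IsFussTableau k n T')
    (hbot : ∀ j, T (Fin.last k) j = T' (Fin.last k) j) : T = T' := by
  set N := (k + 1) * n with hN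
  have hboundT : ∀ i j, T i j ≤ N := fun i j => (Finset.mem_Icc.mp (hT.1.1 i j)).2
  have hboundT' : ∀ i j, T' i j ≤ N := fun i j => (Finset.mem_Icc.mp (hT'.1.1 i j)).2
  have main : ∀ m v, N + 1 - v ≤ m → ∀ i j, (T i j = v ↔ T' i j = v) := by
    intro m
    induction m with
    | zero =>
      intro v hv i j
      have hv : N + 1 ≤ v := by omega
      constructor
      · intro h; exfalso; have := hboundT i j; omega
      · intro h; exfalso; have := hboundT' i j; omega
    | succ m ih =>
      intro v hv i j
      by_cases hvN : N + 1 ≤ v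
      · constructor
        · intro h; exfalso; have := hboundT i j; omega
        · intro h; exfalso; have := hboundT' i j; omega
      · have IH : ∀ u, v < u → ∀ i j, T i j = u ↔ T' i j = u := by
          intro u hu i j
          exact ih u (by omega) i j
        have IH' : ∀ u, v < u → ∀ i j, T' i j = u ↔ T i j = u := by
          intro u hu i j
          exact (IH u hu i j).symm
        exact ⟨s11_key k n T T' hT hT' hbot v IH i j,
          s11_key k n T' T hT' hT (fun j => (hbot j).symm) v IH' i j⟩
  funext i j
  exact ((main (N + 1 - T i j) (T i j) le_rfl i j).mp rfl).symm

lemma s11_necessity (k n : ℕ) (T : Fin (k + 1) → Fin n → ℕ) (hT : IsFilling k n T)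
    (j : Fin n) : ((j : ℕ) + 1) * (k + 1) ≤ T (Fin.last k) j := by
  classical
  set s : Finset (Fin (k+1) × Fin n) :=
    Finset.univ ×ˢ (Finset.univ.filter (fun c => c ≤ j)) with hs
  have hcards : s.card = (k + 1) * ((j : ℕ) + 1) := by
    rw [hs, Finset.card_product]
    have h2 : (Finset.univ.filter (fun c => c ≤ j)) = Finset.Iic j := by
      ext c; simp
    rw [h2, Fin.card_Iic]
    simp
  have hsub : Finset.image (fun p : Fin (k + 1) × Fin n => T p.1 p.2) s
      ⊆ Finset.Icc 1 (T (Fin.last k) j) := by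
    intro x hx
    obtain ⟨p, hp, rfl⟩ := Finset.mem_image.mp hx
    have h1 : 1 ≤ T p.1 p.2 := (Finset.mem_Icc.mp (hT.1 p.1 p.2)).1
    have hc : p.2 ≤ j := by
      rw [hs] at hp
      exact (Finset.mem_filter.mp (Finset.mem_product.mp hp).2).2
    have h2 : T p.1 p.2 ≤ T p.1 j := (hT.2.2.1 p.1).monotone hc
    have h3 : T p.1 j ≤ T (Fin.last k) j := (hT.2.2.2 j).monotone (Fin.le_last p.1)
    exact Finset.mem_Icc.mpr ⟨h1, le_trans h2 h3⟩
  have := Finset.card_le_card hsub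
  rw [Finset.card_image_of_injective _ hT.2.1, hcards, Nat.card_Icc,
    Nat.mul_comm (k+1)] at this
  omega

lemma s11_existence (k n : ℕ) (hn : 0 < n) (b : Fin n → ℕ)
    (hmono : StrictMono b) (hlast : b ⟨n-1, by omega⟩ = (k+1)*n)
    (hb : ∀ j : Fin n, ((j : ℕ) + 1) * (k + 1) ≤ b j) :
    ∃ T : Fin (k+1) → Fin n → ℕ, IsFussTableau k n T ∧ ∀ j, T (Fin.last k) j = b j := by
  classical
  set N := (k+1)*n with hNdef
  have hb1 : ∀ j, 1 ≤ b j := fun j =>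
    le_trans (Nat.one_le_iff_ne_zero.mpr (by positivity)) (hb j)
  have hbN : ∀ j, b j ≤ N := by
    intro j
    have hle : j ≤ (⟨n-1, by omega⟩ : Fin n) := by
      rw [Fin.le_def]
      have := j.2
      simp only []
      omega
    calc b j ≤ b ⟨n-1, by omega⟩ := hmono.monotone hle
      _ = N := hlast
  have hinvN := invA k n hn b hmono hbN hb N le_rfl
  obtain ⟨A1, A2, B, B', E, D⟩ := hinvN
  set g := stA k n b N with hgdef
  -- every column has exactly k+1 entries
  have hsum : ∑ j : Fin n, cntA k n g j = N := by
    have := sum_cntA k n hn g 0 (fun u j h => by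
        have := A1 u j h; omega)
      (fun u h1 h2 => A2 u (by omega) h2)
    simpa using this
  have hcard : ∀ j, cntA k n g j = k + 1 := by
    by_contra hcon
    push_neg at hcon
    obtain ⟨j₀, hj₀⟩ := hcon
    have hlt : cntA k n g j₀ < k + 1 := lt_of_le_of_ne (E j₀) hj₀
    have hslt : ∑ j : Fin n, cntA k n g j < ∑ _j : Fin n, (k+1) :=
      Finset.sum_lt_sum (fun j _ => E j) ⟨j₀, Finset.mem_univ _, hlt⟩
    rw [hsum, Finset.sum_const, Finset.card_univ, Fintype.card_fin, smul_eq_mul] at hslt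
    have hcm : (k+1)*n = n*(k+1) := Nat.mul_comm _ _
    omega
  -- the tableau
  set iso : (j : Fin n) → (Fin (k+1) ≃o {x // x ∈ colsetA k n g j}) :=
    fun j => (colsetA k n g j).orderIsoOfFin (hcard j) with hisodef
  set T : Fin (k+1) → Fin n → ℕ := fun i j => ((iso j) i : ℕ) with hTdef
  have hTmem : ∀ i j, T i j ∈ colsetA k n g j := fun i j => ((iso j) i).2
  have hTg : ∀ i j, g (T i j) = some j := fun i j => (mem_colsetA.mp (hTmem i j)).2
  have hTcol : ∀ j, StrictMono (fun i => T i j) := by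
    intro j i i' hii'
    exact Subtype.coe_lt_coe.mpr ((iso j).strictMono hii')
  have hsurjcol : ∀ j u, u ∈ colsetA k n g j → ∃ i, T i j = u := by
    intro j u hu
    refine ⟨(iso j).symm ⟨u, hu⟩, ?_⟩
    rw [hTdef]
    simp
  -- row monotonicity
  have hTrow : ∀ i : Fin (k+1), StrictMono (T i) := by
    intro i j j' hjj'
    have hu : g (T i j) = some j := hTg i j
    have hD := D j j' (T i j) hjj' hu
    have hF1 : (k : ℕ) - i ≤ cntAboveA k n g j (T i j) := by
      have hmap : ∀ i'' ∈ Finset.Ioi i, T i'' j ∈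
          (colsetA k n g j).filter (fun x => T i j < x) := by
        intro i'' hi''
        exact Finset.mem_filter.mpr ⟨hTmem i'' j, hTcol j (Finset.mem_Ioi.mp hi'')⟩
      have hinj : Set.InjOn (fun i'' => T i'' j) (Finset.Ioi i) :=
        fun a _ b _ hab => (hTcol j).injective hab
      have := Finset.card_le_card_of_injOn _ hmap hinj
      rw [Fin.card_Ioi] at this
      simpa [cntAboveA] using this
    have hF2 : (k : ℕ) - i + 1 ≤ cntAboveA k n g j' (T i j) := by omega
    by_contra hle
    push_neg at hle
    have hIic : (i : ℕ) + 1 ≤ ((colsetA k n g j').filter (fun x => x ≤ T i j)).card := by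
      have hmap : ∀ i'' ∈ Finset.Iic i, T i'' j' ∈
          (colsetA k n g j').filter (fun x => x ≤ T i j) := by
        intro i'' hi''
        refine Finset.mem_filter.mpr ⟨hTmem i'' j', ?_⟩
        calc T i'' j' ≤ T i j' := (hTcol j').monotone (Finset.mem_Iic.mp hi'')
          _ ≤ T i j := hle
      have hinj : Set.InjOn (fun i'' => T i'' j') (Finset.Iic i) :=
        fun a _ b _ hab => (hTcol j').injective hab
      have := Finset.card_le_card_of_injOn _ hmap hinj
      rw [Fin.card_Iic] at this
      exact this
    have hsplit := Finset.card_filter_add_card_filter_not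
      (s := colsetA k n g j') (p := fun x => T i j < x)
    have hnegeq : (colsetA k n g j').filter (fun x => ¬ T i j < x)
        = (colsetA k n g j').filter (fun x => x ≤ T i j) := by
      apply Finset.filter_congr
      intro x _
      simp [not_lt]
    rw [hnegeq] at hsplit
    have hc := hcard j'
    rw [cntA] at hc
    rw [hc] at hsplit
    have : cntAboveA k n g j' (T i j)
        = ((colsetA k n g j').filter (fun x => T i j < x)).card := rfl
    omega
  -- injectivity
  have hTinj : Function.Injective (fun p : Fin (k+1) × Fin n => T p.1 p.2) := by
    intro p q h
    simp only [] at h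
    have hj : p.2 = q.2 := by
      have h1 : g (T p.1 p.2) = some p.2 := hTg p.1 p.2
      have h2 : g (T q.1 q.2) = some q.2 := hTg q.1 q.2
      rw [h] at h1
      rw [h1] at h2
      exact Option.some_injective _ h2
    have hi : p.1 = q.1 := by
      apply (iso p.2).injective
      apply Subtype.ext
      show T p.1 p.2 = T q.1 p.2
      rw [h, hj]
    exact Prod.ext hi hj
  -- membership in Icc
  have hTIcc : ∀ i j, T i j ∈ Finset.Icc 1 ((k+1)*n) := by
    intro i j
    have := (mem_colsetA.mp (hTmem i j)).1
    exact Finset.mem_Icc.mpr this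
  -- bottom row
  have hTbot : ∀ j, T (Fin.last k) j = b j := by
    intro j
    have hbmem : b j ∈ colsetA k n g j :=
      mem_colsetA.mpr ⟨⟨hb1 j, hbN j⟩, B j (by have := hb1 j; omega)⟩
    have hmax : ∀ u ∈ colsetA k n g j, u ≤ T (Fin.last k) j := by
      intro u hu
      obtain ⟨i, hi⟩ := hsurjcol j u hu
      rw [← hi]
      exact (hTcol j).monotone (Fin.le_last i)
    exact le_antisymm (B' _ _ (hTg (Fin.last k) j)) (hmax (b j) hbmem)
  -- transfer to earlier times
  have hback : ∀ t u j₂, t ≤ N → N - t < u → u ≤ N → g u = some j₂ →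
      stA k n b t u = some j₂ := by
    intro t u j₂ htN h1 h2 h3
    obtain ⟨_, A2t, _, _, _, _⟩ := invA k n hn b hmono hbN hb t htN
    obtain ⟨j₃, hj₃⟩ := A2t u h1 h2
    have := stA_mono k n hn b hmono hbN hb (N - t) t u j₃ (by omega) hj₃
    have heq : t + (N - t) = N := by omega
    rw [heq] at this
    rw [hgdef] at h3
    rw [this] at h3
    rw [Option.some_injective _ h3] at hj₃
    exact hj₃
  -- the pick at time N - x is the final column of x
  have hpick_final : ∀ x c₀, 1 ≤ x → x ≤ N → g x = some c₀ →
      pickA k n b (stA k n b (N - x)) x = some c₀ := by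
    intro x c₀ hx1 hxN hgx
    have hNx : N - (N - x) = x := by omega
    have hstep : stA k n b ((N - x) + 1) x
        = pickA k n b (stA k n b (N - x)) x := by
      have heq : stA k n b ((N - x) + 1) = Function.update (stA k n b (N - x))
          (N - (N - x)) (pickA k n b (stA k n b (N - x)) (N - (N - x))) := rfl
      rw [heq, hNx, Function.update_self]
    have hval : stA k n b ((N - x) + 1) x = some c₀ := by
      apply hback ((N - x) + 1) x c₀ (by omega) (by omega) hxN hgx
    rw [← hstep]
    exact hval
  -- no bad quadruple
  have hNBQ : NoBadQuadruple k n T := by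
    intro i hi j r r' c₀ hrr'
    rintro ⟨h1, h2, h3⟩
    have hxy : T r c₀ < T r' c₀ := h2
    have hx1 : 1 ≤ T r c₀ := (Finset.mem_Icc.mp (hTIcc r c₀)).1
    have hxN : T r c₀ ≤ N := (Finset.mem_Icc.mp (hTIcc r c₀)).2
    have hyN : T r' c₀ ≤ N := (Finset.mem_Icc.mp (hTIcc r' c₀)).2
    have hdN : T ⟨(i : ℕ) + 1, hi⟩ j ≤ N := (Finset.mem_Icc.mp (hTIcc _ j)).2
    -- x is not a bottom value
    have hxb : ¬ ∃ j'', b j'' = T r c₀ := by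
      rintro ⟨j'', hj''⟩
      have hBx : g (b j'') = some j'' := B j'' (by have := hb1 j''; omega)
      rw [hj''] at hBx
      have hcc : j'' = c₀ := Option.some_injective _ (hBx ▸ hTg r c₀)
      have hy : T r' c₀ ≤ b c₀ := B' _ _ (hTg r' c₀)
      rw [hcc] at hj''
      rw [hj''] at hy
      omega
    set x := T r c₀ with hxdef
    set t := N - x with htdef
    have htN : t ≤ N := by omega
    have hpx := hpick_final x c₀ hx1 hxN (hTg r c₀)
    have hspec := pickA_spec_max hpx hxb
    set gx := stA k n b t with hgxdef
    obtain ⟨A1t, A2t, _, _, _, _⟩ := invA k n hn b hmono hbN hb t htN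
    have hNt : N - t = x := by omega
    set d := T ⟨(i : ℕ) + 1, hi⟩ j with hddef
    set a := T i j with hadef
    have had : a < d := hTcol j (show i < ⟨(i : ℕ) + 1, hi⟩ by rw [Fin.lt_def]; simp)
    -- d is in column j at time t
    have hgx_d : gx d = some j := hback t d j htN (by omega) hdN (hTg _ j)
    -- column j is active at time t
    have hact_j : activeA k n gx j := by
      constructor
      · have hdmem : d ∈ colsetA k n gx j :=
          mem_colsetA.mpr ⟨⟨by omega, hdN⟩, hgx_d⟩
        exact Finset.card_pos.mpr ⟨d, hdmem⟩
      · have hsub : colsetA k n gx j ⊆ (colsetA k n g j).erase a := by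
          intro u hu
          obtain ⟨⟨hu1, hu2⟩, hu3⟩ := mem_colsetA.mp hu
          have hgu : g u = some j := by
            have := stA_mono k n hn b hmono hbN hb (N - t) t u j (by omega) hu3
            have heq : t + (N - t) = N := by omega
            rw [heq] at this
            exact this
          have hux : x < u := by
            have := (A1t u j hu3).1
            omega
          refine Finset.mem_erase.mpr ⟨by omega, mem_colsetA.mpr ⟨⟨hu1, hu2⟩, hgu⟩⟩
        have hle := Finset.card_le_card hsub
        rw [Finset.card_erase_of_mem (hTmem i j)] at hle
        have hc := hcard j
        rw [cntA] at hc
        rw [hc] at hle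
        exact le_trans hle (by omega)
    -- the top of column j at time t is at least d
    have hsetne_j : {u | gx u = some j}.Nonempty := ⟨d, hgx_d⟩
    have htj_mem : gx (topA n gx j) = some j := Nat.sInf_mem hsetne_j
    have htj_bounds := A1t _ _ htj_mem
    have htj_g : g (topA n gx j) = some j := by
      have := stA_mono k n hn b hmono hbN hb (N - t) t _ j (by omega) htj_mem
      have heq : t + (N - t) = N := by omega
      rw [heq] at this
      exact this
    have htj_col : topA n gx j ∈ colsetA k n g j :=
      mem_colsetA.mpr ⟨⟨by omega, htj_bounds.2⟩, htj_g⟩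
    obtain ⟨i₂, hi₂⟩ := hsurjcol j _ htj_col
    have htj_gt_x : x < topA n gx j := by omega
    have hi₂_gt : i < i₂ := by
      by_contra hcon
      push_neg at hcon
      have := (hTcol j).monotone hcon
      rw [hi₂] at this
      omega
    have hd_le : d ≤ topA n gx j := by
      have hle2 : (⟨(i : ℕ) + 1, hi⟩ : Fin (k+1)) ≤ i₂ := by
        rw [Fin.le_def]
        have := hi₂_gt
        rw [Fin.lt_def] at this
        simp only []
        omega
      have := (hTcol j).monotone hle2
      rw [hi₂] at this
      exact this
    -- the top of column c₀ at time t is at most y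
    have hgx_y : gx (T r' c₀) = some c₀ := hback t _ c₀ htN (by omega) hyN (hTg r' c₀)
    have htc_le : topA n gx c₀ ≤ T r' c₀ := Nat.sInf_le hgx_y
    have hfin := hspec.2 j hact_j
    omega
  exact ⟨T, ⟨⟨hTIcc, hTinj, hTrow, hTcol⟩, hNBQ⟩, hTbot⟩

/-- A tableau `T ∈ 𝒯ₙᵏ` is uniquely determined by its bottom row;
and an increasing sequence `b` with `b n = (k+1)n` occurs as the bottom row of some
`T ∈ 𝒯ₙᵏ` iff `b j ≥ j(k+1)` for all `j`. -/
theorem statement11 (k n : ℕ) (hk : 0 < k) (hn : 0 < n) :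
    (∀ T T' : Fin (k + 1) → Fin n → ℕ, IsFussTableau k n T → IsFussTableau k n T' →
      (∀ j, T (Fin.last k) j = T' (Fin.last k) j) → T = T') ∧
    (∀ b : Fin n → ℕ, StrictMono b → b ⟨n - 1, by omega⟩ = (k + 1) * n →
      ((∃ T : Fin (k + 1) → Fin n → ℕ, IsFussTableau k n T ∧
          ∀ j, T (Fin.last k) j = b j) ↔
        ∀ j : Fin n, ((j : ℕ) + 1) * (k + 1) ≤ b j)) := by
  constructor
  · intro T T' hT hT' hbot
    exact s11_uniqueness k n T T' hT hT' hbot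
  · intro b hmono hlast
    constructor
    · rintro ⟨T, hT, hbotT⟩ j
      have h := s11_necessity k n T hT.1 j
      rw [hbotT j] at h
      exact h
    · intro hb
      exact s11_existence k n hn b hmono hlast hb
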